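/- The critical message-deferral rate equals the total variation distance to the uniform profile: for φ ∈ [0,1), there exists a feasible pair (s,r) whose apparent profile equals the uniform profile u (i.e., q − s + r = u) if and only if φ ≥ TV(u‖q). Moreover TV(u‖q) < 1, so such a rate always exists in [0,1). -/

import Mathlib

/-!
STATEMENT 2. The critical message-deferral rate equals the total variation
distance to the uniform profile: for `φ ∈ [0,1)`, there is a feasible pair
`(s,r)` whose apparent profile `q - s + r` is uniform iff `φ ≥ TV(u‖q)`.
Moreover `TV(u‖q) < 1`, so such a rate always exists in `[0,1)`.
-/

/-- A pair `(s,r)` is feasible for actual profile `q` and deferral rate `φ`. -/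
def Feasible {n : ℕ} (q : Fin n → ℝ) (φ : ℝ) (s r : Fin n → ℝ) : Prop :=
  (∀ i, 0 ≤ s i) ∧ (∀ i, 0 ≤ r i) ∧ (∀ i, 0 ≤ q i - s i + r i) ∧
    (∑ i, s i = φ) ∧ (∑ i, r i = φ)

/-- Total variation distance `TV(p‖q) = ½ ∑ |pᵢ - qᵢ|`. -/
noncomputable def tvDist {n : ℕ} (p q : Fin n → ℝ) : ℝ :=
  (1 / 2) * ∑ i, |p i - q i|

theorem uniform_attainable_iff_critical_rate {n : ℕ} (hn : 2 ≤ n)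
    (q : Fin n → ℝ) (hq0 : ∀ i, 0 ≤ q i) (hq1 : ∑ i, q i = 1) :
    (∀ φ : ℝ, 0 ≤ φ → φ < 1 →
      ((∃ s r, Feasible q φ s r ∧
          (fun i => q i - s i + r i) = fun _ => 1 / (n : ℝ)) ↔
        tvDist (fun _ => 1 / (n : ℝ)) q ≤ φ)) ∧
      tvDist (fun _ => 1 / (n : ℝ)) q < 1 := by
  have hn0 : (0:ℝ) < n := by
    have : (0:ℕ) < n := by omega
    exact_mod_cast this
  set u : Fin n → ℝ := fun _ => 1 / (n : ℝ) with hu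
  have hu0 : ∀ i : Fin n, 0 ≤ u i := fun i => by positivity
  have hsum_u : ∑ i : Fin n, u i = 1 := by
    simp [hu, Finset.sum_const, Finset.card_univ]
    field_simp
  have hsum0 : ∑ i, (u i - q i) = 0 := by
    rw [Finset.sum_sub_distrib, hsum_u, hq1]; ring
  -- TV equals sum of positive parts, both ways
  have habs : ∀ a : ℝ, |a| = max a 0 + max (-a) 0 := fun a => by
    rcases le_total a 0 with h | h
    · rw [abs_of_nonpos h, max_eq_right h, max_eq_left (neg_nonneg.2 h)]; ring
    · rw [abs_of_nonneg h, max_eq_left h, max_eq_right (neg_nonpos.2 h)]; ring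
  have hmaxsub : ∀ a : ℝ, max a 0 - max (-a) 0 = a := fun a => by
    rcases le_total a 0 with h | h
    · rw [max_eq_right h, max_eq_left (neg_nonneg.2 h)]; ring
    · rw [max_eq_left h, max_eq_right (neg_nonpos.2 h)]; ring
  have hposneg : ∑ i, max (u i - q i) 0 = ∑ i, max (q i - u i) 0 := by
    have h := hsum0
    have : ∑ i, (max (u i - q i) 0 - max (q i - u i) 0) = 0 := by
      have : ∀ i : Fin n, max (u i - q i) 0 - max (q i - u i) 0 = u i - q i := by
        intro i
        have := hmaxsub (u i - q i)
        simpa [neg_sub] using this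
      rw [Finset.sum_congr rfl fun i _ => this i, hsum0]
    have h2 := Finset.sum_sub_distrib (s := Finset.univ)
      (f := fun i => max (u i - q i) 0) (g := fun i => max (q i - u i) 0)
    linarith [h2 ▸ this]
  have htv : tvDist u q = ∑ i, max (q i - u i) 0 := by
    unfold tvDist
    have : ∑ i, |u i - q i| = ∑ i, (max (u i - q i) 0 + max (q i - u i) 0) := by
      refine Finset.sum_congr rfl fun i _ => ?_
      have := habs (u i - q i); simpa [neg_sub] using this
    rw [this, Finset.sum_add_distrib, hposneg]; ring
  have htv' : tvDist u q = ∑ i, max (u i - q i) 0 := by rw [htv, hposneg]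
  have htv_nonneg : 0 ≤ tvDist u q := by
    rw [htv]; exact Finset.sum_nonneg fun i _ => le_max_right _ _
  -- TV < 1
  have hlt : tvDist u q < 1 := by
    rw [htv, ← hq1]
    apply Finset.sum_lt_sum
    · intro i _
      rcases le_total (q i - u i) 0 with h | h
      · simp [max_eq_right h]; exact hq0 i
      · rw [max_eq_left h]; have := hu0 i; linarith
    · -- some i with q i > 0
      have : ∃ i : Fin n, 0 < q i := by
        by_contra h
        push_neg at h
        have : ∑ i, q i = 0 := Finset.sum_eq_zero fun i _ => le_antisymm (h i) (hq0 i)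
        rw [hq1] at this; norm_num at this
      obtain ⟨i, hi⟩ := this
      refine ⟨i, Finset.mem_univ i, ?_⟩
      have hui : 0 < u i := by simp [hu]; positivity
      rcases le_total (q i - u i) 0 with h | h
      · rw [max_eq_right h]; exact hi
      · rw [max_eq_left h]; linarith
  constructor
  · intro φ hφ0 hφ1
    constructor
    · rintro ⟨s, r, ⟨hs0, hr0, _, hssum, hrsum⟩, happ⟩
      have hri : ∀ i, r i = u i - q i + s i := by
        intro i
        have := congrFun happ i
        simp only [hu] at this ⊢
        linarith
      have hkey : ∀ i, max (q i - u i) 0 ≤ s i := by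
        intro i
        apply max_le
        · have := hr0 i; rw [hri i] at this; linarith
        · exact hs0 i
      calc tvDist u q = ∑ i, max (q i - u i) 0 := htv
        _ ≤ ∑ i, s i := Finset.sum_le_sum fun i _ => hkey i
        _ = φ := hssum
    · intro htvle
      set δ := (φ - tvDist u q) / n with hδ
      have hδ0 : 0 ≤ δ := by
        apply div_nonneg _ hn0.le; linarith
      refine ⟨fun i => max (q i - u i) 0 + δ, fun i => max (u i - q i) 0 + δ, ?_, ?_⟩
      · refine ⟨fun i => by positivity, fun i => by positivity, ?_, ?_, ?_⟩
        · intro i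
          have h1 := hmaxsub (u i - q i)
          have : max (u i - q i) 0 - max (q i - u i) 0 = u i - q i := by
            simpa [neg_sub] using h1
          have hui := hu0 i
          simp only [hu] at hui ⊢
          linarith
        · rw [Finset.sum_add_distrib, ← htv]
          simp [Finset.sum_const, Finset.card_univ, hδ]
          field_simp
          ring
        · rw [Finset.sum_add_distrib, ← htv']
          simp [Finset.sum_const, Finset.card_univ, hδ]
          field_simp
          ring
      · funext i
        have h1 := hmaxsub (u i - q i)
        have : max (u i - q i) 0 - max (q i - u i) 0 = u i - q i := by
          simpa [neg_sub] using h1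
        simp only [hu] at this ⊢
        linarith
  · exact hlt
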